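/- Let (a_j)_{j ∈ ℕ} be a sequence of reals with 0 ≤ a_j ≤ 1 for all j, and define F(λ) = ∑'_{j ∈ ℕ} c_j(λ) * a_j where c_j(λ) = (λ/2)^j * Real.exp(-λ/2) / j!. Then for every λ ∈ ℝ, F has derivative at λ equal to (1/2) * ∑'_{j ∈ ℕ} c_j(λ) * (a_{j+1} - a_j). In particular, taking a_j = F_{χ²_{d+2j}}(x) to be chi-square CDFs, the noncentral chi-square CDF F_{χ²_{nc,d}(λ)}(x) = Σ_j c_j(λ) F_{χ²_{d+2j}}(x) satisfies ∂F/∂λ = (1/2) Σ_j c_j(λ) [F_{χ²_{d+2(j+1)}}(x) - F_{χ²_{d+2j}}(x)]. -/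

import Mathlib

/-- The Poisson mixture weight `c_j(λ) = (λ/2)^j e^{-λ/2}/j!`. -/
noncomputable def poissonWeight (j : ℕ) (l : ℝ) : ℝ :=
  (l / 2) ^ j * Real.exp (-l / 2) / (Nat.factorial j)

/-- Predecessor weight: `c_{j-1}` for `j ≥ 1` and `0` for `j = 0`. -/
noncomputable def pwPred (j : ℕ) (l : ℝ) : ℝ :=
  match j with
  | 0 => 0
  | k + 1 => poissonWeight k l

lemma hasDerivAt_poissonWeight (j : ℕ) (t : ℝ) :
    HasDerivAt (fun s => poissonWeight j s)
      ((1 / 2) * (pwPred j t - poissonWeight j t)) t := by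
  have h1 : HasDerivAt (fun s : ℝ => s / 2) (1 / 2) t := (hasDerivAt_id t).div_const 2
  have h2 : HasDerivAt (fun s : ℝ => (s / 2) ^ j)
      ((j : ℝ) * (t / 2) ^ (j - 1) * (1 / 2)) t := h1.pow j
  have h3 : HasDerivAt (fun s : ℝ => -s / 2) (-1 / 2) t := (hasDerivAt_id t).neg.div_const 2
  have h4 := h3.exp
  have h5 := (h2.mul h4).div_const (Nat.factorial j : ℝ)
  refine HasDerivAt.congr_deriv (f := fun s => poissonWeight j s) h5 ?_
  symm
  cases j with
  | zero => simp [pwPred, poissonWeight]; ring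
  | succ k =>
    have hfk : (Nat.factorial (k + 1) : ℝ) = (k + 1) * Nat.factorial k := by
      push_cast [Nat.factorial_succ]; ring
    have hfk0 : (Nat.factorial k : ℝ) ≠ 0 := Nat.cast_ne_zero.2 (Nat.factorial_ne_zero k)
    simp only [pwPred, poissonWeight, hfk, Nat.succ_sub_one, pow_succ]
    field_simp
    push_cast
    ring

lemma abs_poissonWeight_le {R t : ℝ} (hR : 0 ≤ R) (ht : |t| ≤ R) (j : ℕ) :
    |poissonWeight j t| ≤ (R / 2) ^ j * Real.exp (R / 2) / (Nat.factorial j) := by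
  have h1 : |(t / 2) ^ j| ≤ (R / 2) ^ j := by
    rw [abs_pow]
    exact pow_le_pow_left₀ (abs_nonneg _) (by rw [abs_div, abs_two]; linarith) j
  have h2 : Real.exp (-t / 2) ≤ Real.exp (R / 2) := by
    apply Real.exp_le_exp.2
    have : -t ≤ |t| := neg_le_abs t
    linarith
  have h3 : (0:ℝ) < Nat.factorial j := by exact_mod_cast Nat.factorial_pos j
  rw [poissonWeight, abs_div, abs_mul, Nat.abs_cast]
  apply (div_le_div_iff_of_pos_right h3).2
  calc |(t / 2) ^ j| * |Real.exp (-t / 2)|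
      = |(t / 2) ^ j| * Real.exp (-t / 2) := by rw [abs_of_pos (Real.exp_pos _)]
    _ ≤ (R / 2) ^ j * Real.exp (R / 2) := by
        apply mul_le_mul h1 h2 (Real.exp_pos _).le (pow_nonneg (by linarith) j)

lemma summable_poissonWeight_mul (t : ℝ) {x : ℕ → ℝ} (hx : ∀ j, |x j| ≤ 1) :
    Summable fun j => poissonWeight j t * x j := by
  apply Summable.of_norm
  have hbs : Summable (fun j => (|t| / 2) ^ j * Real.exp (|t| / 2) / Nat.factorial j) := by
    have := (Real.summable_pow_div_factorial (|t| / 2)).mul_right (Real.exp (|t| / 2))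
    apply this.congr
    intro j; ring
  apply Summable.of_nonneg_of_le (fun j => norm_nonneg _) _ hbs
  intro j
  rw [Real.norm_eq_abs, abs_mul]
  calc |poissonWeight j t| * |x j| ≤ |poissonWeight j t| * 1 :=
        mul_le_mul_of_nonneg_left (hx j) (abs_nonneg _)
    _ = |poissonWeight j t| := mul_one _
    _ ≤ _ := abs_poissonWeight_le (abs_nonneg t) le_rfl j

/-- Derivative of a Poisson mixture `F(λ) = Σ_j c_j(λ) a_j` of `[0,1]`-valued coefficients:
`F'(λ) = (1/2) Σ_j c_j(λ) (a_{j+1} - a_j)`. In particular this gives `∂F_{χ²_{nc,d}(λ)}/∂λ`. -/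
theorem poisson_mixture_hasDerivAt (a : ℕ → ℝ) (ha : ∀ j, 0 ≤ a j ∧ a j ≤ 1) (l : ℝ) :
    HasDerivAt (fun t => ∑' j : ℕ, poissonWeight j t * a j)
      ((1 / 2) * ∑' j : ℕ, poissonWeight j l * (a (j + 1) - a j)) l := by
  have haj : ∀ j, |a j| ≤ 1 := fun j => abs_le.2 ⟨by linarith [(ha j).1], (ha j).2⟩
  set R : ℝ := |l| + 1 with hRdef
  have hR : 0 ≤ R := by positivity
  set b : ℕ → ℝ := fun j => (R / 2) ^ j * Real.exp (R / 2) / Nat.factorial j with hb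
  have hb_nonneg : ∀ j, 0 ≤ b j := by
    intro j; apply div_nonneg; positivity; positivity
  have hb_summable : Summable b := by
    have := (Real.summable_pow_div_factorial (R / 2)).mul_right (Real.exp (R / 2))
    apply this.congr; intro j; simp [hb]; ring
  set bP : ℕ → ℝ := fun j => match j with | 0 => 0 | k + 1 => b k with hbP
  have hbP_summable : Summable bP := by
    have : Summable (fun n => bP (n + 1)) := hb_summable
    exact (summable_nat_add_iff 1).mp this
  set u : ℕ → ℝ := fun j => (1 / 2) * (bP j + b j) with hu
  have hu_summable : Summable u := ((hbP_summable.add hb_summable).mul_left _)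
  set g : ℕ → ℝ → ℝ := fun j t => poissonWeight j t * a j with hg
  set g' : ℕ → ℝ → ℝ := fun j t => ((1 / 2) * (pwPred j t - poissonWeight j t)) * a j with hg'
  have hderiv : ∀ n y, y ∈ Metric.ball l 1 → HasDerivAt (g n) (g' n y) y := fun n y _ =>
    (hasDerivAt_poissonWeight n y).mul_const (a n)
  have hbound : ∀ n y, y ∈ Metric.ball l 1 → ‖g' n y‖ ≤ u n := by
    intro n y hy
    have hyR : |y| ≤ R := by
      have : |y - l| < 1 := by simpa [Real.dist_eq] using hy
      have := abs_sub_abs_le_abs_sub y l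
      simp only [hRdef]; linarith
    have h1 : |pwPred n y| ≤ bP n := by
      cases n with
      | zero => simp [pwPred, hbP]
      | succ k => exact abs_poissonWeight_le hR hyR k
    have h2 : |poissonWeight n y| ≤ b n := abs_poissonWeight_le hR hyR n
    rw [hg', Real.norm_eq_abs, abs_mul, abs_mul]
    calc |1 / 2| * |pwPred n y - poissonWeight n y| * |a n|
        ≤ |1 / 2| * (|pwPred n y| + |poissonWeight n y|) * 1 := by
          apply mul_le_mul (mul_le_mul_of_nonneg_left (abs_sub _ _) (abs_nonneg _)) (haj n)
            (abs_nonneg _)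
          positivity
      _ ≤ (1 / 2) * (bP n + b n) := by
          rw [mul_one, abs_of_pos (by norm_num : (0:ℝ) < 1/2)]
          apply mul_le_mul_of_nonneg_left (by linarith) (by norm_num)
      _ = u n := rfl
  have key := hasDerivAt_tsum_of_isPreconnected hu_summable Metric.isOpen_ball
    (convex_ball l 1).isPreconnected hderiv hbound (Metric.mem_ball_self one_pos)
    (summable_poissonWeight_mul l haj) (Metric.mem_ball_self one_pos)
  refine HasDerivAt.congr_deriv (f := fun t => ∑' j : ℕ, poissonWeight j t * a j) key ?_
  symm
  -- now show (1/2) * ∑' c_j (a_{j+1} - a_j) = ∑' g' j l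
  have hS1 : Summable fun j => poissonWeight j l * a j := summable_poissonWeight_mul l haj
  have hS2 : Summable fun j => poissonWeight j l * a (j + 1) :=
    summable_poissonWeight_mul l (fun j => haj (j + 1))
  have hSP : Summable fun j => pwPred j l * a j := by
    have : Summable (fun n => pwPred (n + 1) l * a (n + 1)) := hS2
    exact (summable_nat_add_iff 1).mp this
  have hshift : ∑' j, pwPred j l * a j = ∑' j, poissonWeight j l * a (j + 1) := by
    rw [Summable.tsum_eq_zero_add hSP]
    simp [pwPred]
  calc (1 / 2) * ∑' j, poissonWeight j l * (a (j + 1) - a j)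
      = (1 / 2) * (∑' j, (poissonWeight j l * a (j + 1) - poissonWeight j l * a j)) := by
        congr 1; apply tsum_congr; intro j; ring
    _ = (1 / 2) * ((∑' j, poissonWeight j l * a (j + 1)) - ∑' j, poissonWeight j l * a j) := by
        rw [Summable.tsum_sub hS2 hS1]
    _ = (1 / 2) * ((∑' j, pwPred j l * a j) - ∑' j, poissonWeight j l * a j) := by
        rw [hshift]
    _ = ∑' j, ((1 / 2) * (pwPred j l - poissonWeight j l)) * a j := by
        rw [← Summable.tsum_sub hSP hS1, ← tsum_mul_left]
        apply tsum_congr; intro j; ring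
    _ = ∑' j, g' j l := rfl
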